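/- Let 1 ≤ p < q < ∞. There exists a constant C > 0 such that for every sequence (f_k)_{k∈ℕ} of measurable functions on [0,1], sup_{t>0} t · (#{k ∈ ℕ : ‖f_k‖_{L^p[0,1]} > t})^{1/q} ≤ C · ‖ x ↦ sup_{t>0} t · (#{k ∈ ℕ : |f_k(x)| > t})^{1/q} ‖_{L^p[0,1]}, where the cardinalities are taken in [0,∞] (counting measure on ℕ). (That is, the mixed-norm embedding L^p(ℓ^{q,∞}) ⊂ ℓ^{q,∞}(L^p) holds.) -/

import Mathlib

open MeasureTheory
open scoped ENNReal

/-- Lebesgue measure restricted to `[0,1]`. -/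
noncomputable def mu01 : Measure ℝ := volume.restrict (Set.Icc 0 1)

/-- The weight `W_p(t) = (log(e/t))^{1-p}` for `t ∈ (0,1]`, `W_p(0)=0`. -/
noncomputable def Wp (p t : ℝ) : ℝ :=
  if t = 0 then 0 else Real.log (Real.exp 1 / t) ^ (1 - p)

/-- The norm of the Lorentz space `X_p` on `[0,1]`:
`‖f‖_{X_p} = (∫_0^∞ W_p(μ{s ∈ [0,1] : |f s|^p > λ}) dλ)^{1/p}`. -/
noncomputable def XpNorm (p : ℝ) (f : ℝ → ℝ) : ℝ≥0∞ :=
  (∫⁻ lam in Set.Ioi (0 : ℝ),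
      ENNReal.ofReal
        (Wp p (volume {s : ℝ | s ∈ Set.Icc (0 : ℝ) 1 ∧ lam < |f s| ^ p}).toReal)) ^ (1 / p)

/-- Luxemburg norm of the exponential Orlicz space `Exp L^α` on `[0,1]`. -/
noncomputable def expLNorm (α : ℝ) (f : ℝ → ℝ) : ℝ≥0∞ :=
  ⨅ (lam : ℝ) (_ : 0 < lam ∧
      ∫⁻ t, ENNReal.ofReal (Real.exp ((|f t| / lam) ^ α) - 1) ∂mu01 ≤ 1),
    ENNReal.ofReal lam

/-- Weak `ℓ^q` quasinorm of a finite family of reals. -/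
noncomputable def weakLq (q : ℝ) {n : ℕ} (a : Fin n → ℝ) : ℝ :=
  ⨆ t : Set.Ioi (0 : ℝ), t.1 * (Nat.card {k : Fin n // t.1 < |a k|} : ℝ) ^ (1 / q)

/-- Weak `ℓ^q` quasinorm of a sequence with values in `[0,∞]`, cardinalities
taken via the counting measure on `ℕ`. -/
noncomputable def weakLqSeq (q : ℝ) (a : ℕ → ℝ≥0∞) : ℝ≥0∞ :=
  ⨆ t : Set.Ioi (0 : ℝ),
    ENNReal.ofReal t.1 * Measure.count {k : ℕ | ENNReal.ofReal t.1 < a k} ^ (1 / q)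

/-- Peetre `K`-functional for the couple `(L^1[0,1], L^∞[0,1])`. -/
noncomputable def Kfun (τ : ℝ) (f : ℝ → ℝ) : ℝ≥0∞ :=
  ⨅ (g : ℝ → ℝ) (h : ℝ → ℝ) (_ : f = g + h),
    eLpNorm g 1 mu01 + ENNReal.ofReal τ * eLpNorm h ⊤ mu01

/-- The Rademacher functions `r_k(t) = sgn(sin(2^k π t))`. -/
noncomputable def rademacher (k : ℕ) (t : ℝ) : ℝ :=
  Real.sign (Real.sin (2 ^ k * Real.pi * t))

/-- Marcinkiewicz space norm `‖f‖_{M_φ} = sup_{0<t≤1} (φ(t)/t) K(t,f;L^1,L^∞)`. -/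
noncomputable def MNorm (φ : ℝ → ℝ) (f : ℝ → ℝ) : ℝ≥0∞ :=
  ⨆ t : {t : ℝ // 0 < t ∧ t ≤ 1}, ENNReal.ofReal (φ t.1 / t.1) * Kfun t.1 f
lemma countLemma (q : ℝ) (hq : 0 < q) (a : ℕ → ℝ≥0∞) {s : ℝ} (hs : 0 < s) :
    Measure.count {k : ℕ | ENNReal.ofReal s < a k} ≤ (weakLqSeq q a / ENNReal.ofReal s) ^ q := by
  have h1 : ENNReal.ofReal s * Measure.count {k : ℕ | ENNReal.ofReal s < a k} ^ (1/q)
      ≤ weakLqSeq q a :=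
    le_iSup (fun t : Set.Ioi (0:ℝ) =>
      ENNReal.ofReal t.1 * Measure.count {k : ℕ | ENNReal.ofReal t.1 < a k} ^ (1/q)) ⟨s, hs⟩
  have hs0 : ENNReal.ofReal s ≠ 0 := (ENNReal.ofReal_pos.mpr hs).ne'
  have h2 : Measure.count {k : ℕ | ENNReal.ofReal s < a k} ^ (1/q)
      ≤ weakLqSeq q a / ENNReal.ofReal s := by
    rw [ENNReal.le_div_iff_mul_le (Or.inl hs0) (Or.inl ENNReal.ofReal_ne_top), mul_comm]
    exact h1
  calc Measure.count {k : ℕ | ENNReal.ofReal s < a k}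
      = (Measure.count {k : ℕ | ENNReal.ofReal s < a k} ^ (1/q)) ^ q := by
        rw [← ENNReal.rpow_mul, one_div, inv_mul_cancel₀ hq.ne', ENNReal.rpow_one]
    _ ≤ _ := ENNReal.rpow_le_rpow h2 hq.le

lemma pointwise_sum_bound (p q : ℝ) (hp : 1 ≤ p) (hpq : p < q) (a : ℕ → ℝ≥0∞)
    (ha : ∀ k, a k ≠ ∞) (F : Finset ℕ) :
    ∑ k ∈ F, a k ^ p ≤
      ENNReal.ofReal (1 + 2 ^ p * (1 - (2:ℝ) ^ (p - q))⁻¹) *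
        ((F.card : ℝ≥0∞) ^ (1 - p/q) * weakLqSeq q a ^ p) := by
  classical
  have hp0 : (0:ℝ) < p := by linarith
  have hq0 : (0:ℝ) < q := by linarith
  set ρ := (2:ℝ) ^ (p - q) with hρdef
  have hρ0 : 0 < ρ := Real.rpow_pos_of_pos two_pos _
  have hρ1 : ρ < 1 := Real.rpow_lt_one_of_one_lt_of_neg one_lt_two (by linarith)
  have hDpos : 0 < 1 + (2:ℝ) ^ p * (1 - ρ)⁻¹ := by
    have : 0 < (1 - ρ)⁻¹ := inv_pos.mpr (by linarith)
    positivity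
  rcases Nat.eq_zero_or_pos F.card with h0 | hn
  · rw [Finset.card_eq_zero.mp h0]
    simp
  set W := weakLqSeq q a with hWdef
  rcases eq_or_ne W 0 with hW0 | hW0
  · have hzero : ∀ k, a k = 0 := by
      intro k
      by_contra hk
      have hkt := ha k
      have htr : 0 < (a k).toReal := ENNReal.toReal_pos hk hkt
      have hlt : ENNReal.ofReal ((a k).toReal / 2) < a k := by
        rw [ENNReal.ofReal_lt_iff_lt_toReal (by positivity) hkt]
        linarith
      have hc := countLemma q hq0 a (s := (a k).toReal / 2) (by positivity)
      rw [← hWdef, hW0, ENNReal.zero_div, ENNReal.zero_rpow_of_pos hq0] at hc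
      have : Measure.count {j : ℕ | ENNReal.ofReal ((a k).toReal / 2) < a j} = 0 :=
        le_antisymm hc zero_le
      have hmem : k ∈ {j : ℕ | ENNReal.ofReal ((a k).toReal / 2) < a j} := hlt
      have := Measure.count_eq_zero_iff.mp this
      rw [this] at hmem
      exact hmem
    have : ∑ k ∈ F, a k ^ p = 0 := by
      apply Finset.sum_eq_zero
      intro k _
      rw [hzero k, ENNReal.zero_rpow_of_pos hp0]
    rw [this]
    exact zero_le
  rcases eq_or_ne W ∞ with hWtop | hWtop
  · have hpos : (0:ℝ≥0∞) < (F.card : ℝ≥0∞) ^ ((1:ℝ) - p/q) :=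
      ENNReal.rpow_pos (by exact_mod_cast hn) (ENNReal.natCast_ne_top _)
    have : (F.card : ℝ≥0∞) ^ ((1:ℝ) - p/q) * W ^ p = ⊤ := by
      rw [hWtop, ENNReal.top_rpow_of_pos hp0, ENNReal.mul_top hpos.ne']
    rw [this, ENNReal.mul_top (by simp [hDpos.not_ge, ENNReal.ofReal_eq_zero])]
    exact le_top
  -- main case
  set w := W.toReal with hwdef
  have hw : 0 < w := ENNReal.toReal_pos hW0 hWtop
  have hWw : W = ENNReal.ofReal w := (ENNReal.ofReal_toReal hWtop).symm
  have hn0 : (0:ℝ) < (F.card : ℝ) := by exact_mod_cast hn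
  set n := F.card with hndef
  clear_value n
  set t0 := w * (n:ℝ) ^ (-(1/q)) with ht0def
  have ht0 : 0 < t0 := by positivity
  set c : ℕ → ℝ := fun j => t0 * 2 ^ (j:ℝ) with hcdef
  have hc : ∀ j, 0 < c j := fun j => by
    rw [hcdef]; positivity
  set K := w ^ p * (n:ℝ) ^ (1 - p/q) * 2 ^ p with hKdef
  have hK0 : 0 < K := by positivity
  -- real identities
  have hnt0 : (n:ℝ) * t0 ^ p = w ^ p * (n:ℝ) ^ (1 - p/q) := by
    have h1 : 0 < (n:ℝ) * t0 ^ p := by positivity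
    have h2 : 0 < w ^ p * (n:ℝ) ^ (1 - p/q) := by positivity
    apply Real.log_injOn_pos (Set.mem_Ioi.mpr h1) (Set.mem_Ioi.mpr h2)
    rw [Real.log_mul hn0.ne' (by positivity : (0:ℝ) < t0 ^ p).ne',
      Real.log_rpow ht0, ht0def,
      Real.log_mul hw.ne' (by positivity : (0:ℝ) < (n:ℝ) ^ (-(1/q))).ne',
      Real.log_rpow hn0,
      Real.log_mul (by positivity : (0:ℝ) < w ^ p).ne'
        (by positivity : (0:ℝ) < (n:ℝ) ^ (1 - p/q)).ne',
      Real.log_rpow hw, Real.log_rpow hn0]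
    field_simp
    ring
  have hterm : ∀ j : ℕ, (c (j+1)) ^ p * (w / c j) ^ q = K * ρ ^ j := by
    intro j
    have h1 : 0 < (c (j+1)) ^ p * (w / c j) ^ q := by
      have := hc j; have := hc (j+1); positivity
    have h2 : 0 < K * ρ ^ j := by positivity
    apply Real.log_injOn_pos (Set.mem_Ioi.mpr h1) (Set.mem_Ioi.mpr h2)
    have hlogc : ∀ m : ℕ, Real.log (c m)
        = Real.log w + (-(1/q)) * Real.log (n:ℝ) + (m:ℝ) * Real.log 2 := by
      intro m
      rw [hcdef]
      simp only []
      rw [Real.log_mul ht0.ne' (by positivity : (0:ℝ) < (2:ℝ) ^ (m:ℝ)).ne',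
        ht0def,
        Real.log_mul hw.ne' (by positivity : (0:ℝ) < (n:ℝ) ^ (-(1/q))).ne',
        Real.log_rpow hn0, Real.log_rpow two_pos]
    rw [Real.log_mul (by positivity : (0:ℝ) < (c (j+1)) ^ p).ne'
        (by have := hc j; positivity : (0:ℝ) < (w / c j) ^ q).ne',
      Real.log_rpow (hc (j+1)), Real.log_rpow (by have := hc j; positivity),
      Real.log_div hw.ne' (hc j).ne', hlogc, hlogc,
      hKdef,
      Real.log_mul (by positivity : (0:ℝ) < w ^ p * (n:ℝ) ^ (1 - p/q) * 2 ^ p).ne'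
        (by positivity : (0:ℝ) < ρ ^ j).ne',
      Real.log_mul (by positivity : (0:ℝ) < w ^ p * (n:ℝ) ^ (1 - p/q)).ne'
        (by positivity : (0:ℝ) < (2:ℝ) ^ p).ne',
      Real.log_mul (by positivity : (0:ℝ) < w ^ p).ne'
        (by positivity : (0:ℝ) < (n:ℝ) ^ (1 - p/q)).ne',
      Real.log_rpow hw, Real.log_rpow hn0, Real.log_rpow two_pos]
    rw [Real.log_pow, hρdef, Real.log_rpow two_pos]
    push_cast
    field_simp
    ring
  have hinv : 0 < (1 - ρ)⁻¹ := inv_pos.mpr (by linarith)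
  -- split F
  set P : ℕ → Prop := fun k => a k ≤ ENNReal.ofReal t0 with hPdef
  have hsplit : ∑ k ∈ F, a k ^ p
      = ∑ k ∈ F.filter P, a k ^ p + ∑ k ∈ F.filter (fun k => ¬ P k), a k ^ p :=
    (Finset.sum_filter_add_sum_filter_not F P _).symm
  -- bound on small part
  have bound1 : ∑ k ∈ F.filter P, a k ^ p ≤ ENNReal.ofReal ((n:ℝ) * t0 ^ p) := by
    calc ∑ k ∈ F.filter P, a k ^ p
        ≤ ∑ _k ∈ F.filter P, ENNReal.ofReal (t0 ^ p) := by
          apply Finset.sum_le_sum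
          intro k hk
          rw [← ENNReal.ofReal_rpow_of_pos ht0]
          exact ENNReal.rpow_le_rpow (Finset.mem_filter.mp hk).2 hp0.le
      _ = ((F.filter P).card : ℝ≥0∞) * ENNReal.ofReal (t0 ^ p) := by
          rw [Finset.sum_const, nsmul_eq_mul]
      _ ≤ (n : ℝ≥0∞) * ENNReal.ofReal (t0 ^ p) := by
          apply mul_le_mul_left
          exact_mod_cast Nat.cast_le.mpr ((Finset.card_filter_le F P).trans hndef.ge)
      _ = ENNReal.ofReal ((n:ℝ) * t0 ^ p) := by
          rw [ENNReal.ofReal_mul (by positivity), ENNReal.ofReal_natCast]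
  -- dyadic part
  set G : ℕ → ℕ → ℝ≥0∞ := fun j k =>
    if ENNReal.ofReal (c j) < a k ∧ a k ≤ ENNReal.ofReal (c (j+1))
    then ENNReal.ofReal (c (j+1)) ^ p else 0 with hGdef
  have hper : ∀ k ∈ F.filter (fun k => ¬ P k), a k ^ p ≤ ∑' j, G j k := by
    intro k hk
    have hk2 : ENNReal.ofReal t0 < a k := not_le.mp (Finset.mem_filter.mp hk).2
    have hak := ha k
    set r := (a k).toReal with hrdef
    have hr : t0 < r := (ENNReal.ofReal_lt_iff_lt_toReal ht0.le hak).mp hk2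
    obtain ⟨m, hm⟩ := pow_unbounded_of_one_lt (r / t0) one_lt_two
    have hex : ∃ j : ℕ, r ≤ t0 * 2 ^ (j+1) := by
      refine ⟨m, ?_⟩
      have : r < t0 * 2 ^ m := by
        rw [div_lt_iff₀ ht0] at hm
        linarith [hm]
      have h2m : (t0:ℝ) * 2 ^ m ≤ t0 * 2 ^ (m+1) := by
        have : (2:ℝ) ^ m ≤ 2 ^ (m+1) := by
          apply pow_le_pow_right₀ one_le_two (Nat.le_succ m)
        nlinarith
      linarith
    set j := Nat.find hex with hjdef
    have hj1 : r ≤ t0 * 2 ^ (j+1) := Nat.find_spec hex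
    have hj2 : t0 * 2 ^ j < r := by
      rcases Nat.eq_zero_or_pos j with hj0 | hj0
      · rw [hj0]; simpa using hr
      · obtain ⟨i, hi⟩ := Nat.exists_eq_succ_of_ne_zero hj0.ne'
        have hmin := Nat.find_min hex (m := i) (by omega)
        push_neg at hmin
        rw [hi]
        exact hmin
    have hcj : c j = t0 * 2 ^ j := by
      rw [hcdef]; simp only []; rw [Real.rpow_natCast]
    have hcj1 : c (j+1) = t0 * 2 ^ (j+1) := by
      rw [hcdef]; simp only []; rw [Real.rpow_natCast]
    have hcond : ENNReal.ofReal (c j) < a k ∧ a k ≤ ENNReal.ofReal (c (j+1)) := by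
      constructor
      · rw [ENNReal.ofReal_lt_iff_lt_toReal (hc j).le hak, hcj]; exact hj2
      · rw [ENNReal.le_ofReal_iff_toReal_le hak (hc (j+1)).le, hcj1]; exact hj1
    calc a k ^ p ≤ ENNReal.ofReal (c (j+1)) ^ p :=
          ENNReal.rpow_le_rpow hcond.2 hp0.le
      _ = G j k := by rw [hGdef]; simp only [if_pos hcond]
      _ ≤ ∑' j, G j k := ENNReal.le_tsum j
  have bound2 : ∑ k ∈ F.filter (fun k => ¬ P k), a k ^ p
      ≤ ENNReal.ofReal (K * (1 - ρ)⁻¹) := by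
    have hswap : ∑ k ∈ F.filter (fun k => ¬ P k), (∑' j, G j k)
        = ∑' j, ∑ k ∈ F.filter (fun k => ¬ P k), G j k := by
      rw [← Finset.tsum_subtype]
      rw [ENNReal.tsum_comm]
      exact tsum_congr fun j => Finset.tsum_subtype _ _
    have hjb : ∀ j, ∑ k ∈ F.filter (fun k => ¬ P k), G j k
        ≤ ENNReal.ofReal (K * ρ ^ j) := by
      intro j
      have e1 : ∑ k ∈ F.filter (fun k => ¬ P k), G j k
          = (((F.filter (fun k => ¬ P k)).filter
              (fun k => ENNReal.ofReal (c j) < a k ∧ a k ≤ ENNReal.ofReal (c (j+1)))).card : ℝ≥0∞)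
            * ENNReal.ofReal (c (j+1)) ^ p := by
        rw [hGdef]
        rw [Finset.sum_ite, Finset.sum_const, Finset.sum_const, smul_zero, add_zero,
          nsmul_eq_mul]
      have e2 : (((F.filter (fun k => ¬ P k)).filter
              (fun k => ENNReal.ofReal (c j) < a k ∧ a k ≤ ENNReal.ofReal (c (j+1)))).card : ℝ≥0∞)
          ≤ Measure.count {k : ℕ | ENNReal.ofReal (c j) < a k} := by
        rw [← Measure.count_apply_finset]
        apply measure_mono
        intro k hk
        exact (Finset.mem_filter.mp (Finset.mem_coe.mp hk)).2.1
      have e3 := countLemma q hq0 a (hc j)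
      rw [← hWdef] at e3
      calc ∑ k ∈ F.filter (fun k => ¬ P k), G j k
          ≤ Measure.count {k : ℕ | ENNReal.ofReal (c j) < a k}
              * ENNReal.ofReal (c (j+1)) ^ p := by
            rw [e1]; exact mul_le_mul_left e2 _
        _ ≤ (W / ENNReal.ofReal (c j)) ^ q * ENNReal.ofReal (c (j+1)) ^ p :=
            mul_le_mul_left e3 _
        _ = ENNReal.ofReal (K * ρ ^ j) := by
            rw [hWw, ← ENNReal.ofReal_div_of_pos (hc j),
              ENNReal.ofReal_rpow_of_pos (by have := hc j; positivity),
              ENNReal.ofReal_rpow_of_pos (hc (j+1)),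
              ← ENNReal.ofReal_mul (by have := hc j; positivity),
              mul_comm ((w / c j) ^ q) _, hterm j]
    calc ∑ k ∈ F.filter (fun k => ¬ P k), a k ^ p
        ≤ ∑ k ∈ F.filter (fun k => ¬ P k), (∑' j, G j k) := Finset.sum_le_sum hper
      _ = ∑' j, ∑ k ∈ F.filter (fun k => ¬ P k), G j k := hswap
      _ ≤ ∑' j, ENNReal.ofReal (K * ρ ^ j) := ENNReal.tsum_le_tsum hjb
      _ = ENNReal.ofReal K * ∑' j, ENNReal.ofReal ρ ^ j := by
          simp_rw [ENNReal.ofReal_mul hK0.le, ENNReal.ofReal_pow hρ0.le]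
          exact ENNReal.tsum_mul_left
      _ = ENNReal.ofReal K * (1 - ENNReal.ofReal ρ)⁻¹ := by
          rw [ENNReal.tsum_geometric]
      _ = ENNReal.ofReal (K * (1 - ρ)⁻¹) := by
          rw [show (1:ℝ≥0∞) - ENNReal.ofReal ρ = ENNReal.ofReal (1 - ρ) by
              rw [ENNReal.ofReal_sub _ hρ0.le, ENNReal.ofReal_one],
            ← ENNReal.ofReal_inv_of_pos (by linarith),
            ← ENNReal.ofReal_mul hK0.le]
  -- combine
  have hWp : W ^ p = ENNReal.ofReal (w ^ p) := by
    rw [hWw, ENNReal.ofReal_rpow_of_pos hw]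
  have hnp : (n:ℝ≥0∞) ^ ((1:ℝ) - p/q) = ENNReal.ofReal ((n:ℝ) ^ ((1:ℝ) - p/q)) := by
    rw [← ENNReal.ofReal_natCast, ENNReal.ofReal_rpow_of_pos hn0]
  rw [hsplit]
  calc ∑ k ∈ F.filter P, a k ^ p + ∑ k ∈ F.filter (fun k => ¬ P k), a k ^ p
      ≤ ENNReal.ofReal ((n:ℝ) * t0 ^ p) + ENNReal.ofReal (K * (1 - ρ)⁻¹) :=
        add_le_add bound1 bound2
    _ = ENNReal.ofReal ((n:ℝ) * t0 ^ p + K * (1 - ρ)⁻¹) := by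
        rw [ENNReal.ofReal_add (by positivity) (mul_nonneg hK0.le hinv.le)]
    _ ≤ ENNReal.ofReal ((1 + 2 ^ p * (1 - ρ)⁻¹) * ((n:ℝ) ^ ((1:ℝ) - p/q) * w ^ p)) := by
        apply ENNReal.ofReal_le_ofReal
        rw [hnt0, hKdef]
        apply le_of_eq
        ring
    _ = ENNReal.ofReal (1 + 2 ^ p * (1 - ρ)⁻¹)
          * ((n:ℝ≥0∞) ^ ((1:ℝ) - p/q) * W ^ p) := by
        rw [hWp, hnp, ← ENNReal.ofReal_mul (by positivity),
          ← ENNReal.ofReal_mul (by positivity)]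

/-- Theorem: for `1 ≤ p < q < ∞`, the mixed-norm embedding
`L^p(ℓ^{q,∞}) ⊂ ℓ^{q,∞}(L^p)` holds (sequences of measurable functions). -/
theorem Lp_weak_lq_mixed_norm_embedding (p q : ℝ) (hp : 1 ≤ p) (hpq : p < q) :
    ∃ C : ℝ, 0 < C ∧ ∀ f : ℕ → ℝ → ℝ, (∀ k, Measurable (f k)) →
      weakLqSeq q (fun k => eLpNorm (f k) (ENNReal.ofReal p) mu01) ≤
        ENNReal.ofReal C *
          (∫⁻ x, weakLqSeq q (fun k => ENNReal.ofReal |f k x|) ^ p ∂mu01) ^ (1 / p) := by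
  classical
  have hp0 : (0:ℝ) < p := by linarith
  have hq0 : (0:ℝ) < q := by linarith
  have hρ1 : (2:ℝ) ^ (p - q) < 1 :=
    Real.rpow_lt_one_of_one_lt_of_neg one_lt_two (by linarith)
  have hρ0 : (0:ℝ) < (2:ℝ) ^ (p - q) := Real.rpow_pos_of_pos two_pos _
  have hepos : (0:ℝ) ≤ 1 - p/q := by
    have := (div_le_one hq0).mpr hpq.le
    linarith
  set Dr : ℝ := 1 + 2 ^ p * (1 - (2:ℝ) ^ (p - q))⁻¹ with hDr
  have hinv : 0 < (1 - (2:ℝ) ^ (p-q))⁻¹ := inv_pos.mpr (by linarith)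
  have hDpos : 0 < Dr := by rw [hDr]; positivity
  refine ⟨Dr ^ (1/p), Real.rpow_pos_of_pos hDpos _, ?_⟩
  intro f hf
  set I := ∫⁻ x, weakLqSeq q (fun k => ENNReal.ofReal |f k x|) ^ p ∂mu01 with hI
  have key : ∀ t : ℝ, 0 < t → ∀ F : Finset ℕ,
      (∀ k ∈ F, ENNReal.ofReal t < eLpNorm (f k) (ENNReal.ofReal p) mu01) →
      (F.card : ℝ≥0∞) ^ (p/q) * ENNReal.ofReal (t ^ p) ≤ ENNReal.ofReal Dr * I := by
    intro t ht F hF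
    rcases Nat.eq_zero_or_pos F.card with h0 | h0
    · rw [h0]
      simp [ENNReal.zero_rpow_of_pos (by positivity : (0:ℝ) < p/q)]
    have hcard0 : ((F.card : ℝ≥0∞)) ≠ 0 := Nat.cast_ne_zero.mpr h0.ne'
    have hcardtop : ((F.card : ℝ≥0∞)) ≠ ⊤ := ENNReal.natCast_ne_top _
    have hint : ∀ k ∈ F, ENNReal.ofReal (t ^ p) ≤ ∫⁻ x, ENNReal.ofReal |f k x| ^ p ∂mu01 := by
      intro k hk
      have h1 := hF k hk
      have hpne : (ENNReal.ofReal p) ≠ 0 := by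
        simp only [ne_eq, ENNReal.ofReal_eq_zero, not_le]; linarith
      rw [eLpNorm_eq_lintegral_rpow_enorm_toReal hpne ENNReal.ofReal_ne_top,
        ENNReal.toReal_ofReal hp0.le] at h1
      have h3 := ENNReal.rpow_le_rpow h1.le hp0.le
      rw [← ENNReal.rpow_mul, one_div, inv_mul_cancel₀ hp0.ne', ENNReal.rpow_one] at h3
      simp_rw [Real.enorm_eq_ofReal_abs] at h3
      rw [← ENNReal.ofReal_rpow_of_pos ht]
      exact h3
    have hmeas : ∀ k ∈ F, Measurable fun x => ENNReal.ofReal |f k x| ^ p := by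
      intro k _
      exact ((hf k).abs.ennreal_ofReal).pow_const _  -- may need fixing
    have step1 : (F.card : ℝ≥0∞) * ENNReal.ofReal (t^p)
        ≤ ∫⁻ x, ∑ k ∈ F, ENNReal.ofReal |f k x| ^ p ∂mu01 := by
      rw [lintegral_finset_sum F hmeas]
      calc (F.card:ℝ≥0∞) * ENNReal.ofReal (t^p)
          = ∑ _k ∈ F, ENNReal.ofReal (t^p) := by rw [Finset.sum_const, nsmul_eq_mul]
        _ ≤ _ := Finset.sum_le_sum hint
    have step2 : ∫⁻ x, ∑ k ∈ F, ENNReal.ofReal |f k x| ^ p ∂mu01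
        ≤ ENNReal.ofReal Dr * ((F.card:ℝ≥0∞) ^ ((1:ℝ) - p/q) * I) := by
      calc ∫⁻ x, ∑ k ∈ F, ENNReal.ofReal |f k x| ^ p ∂mu01
          ≤ ∫⁻ x, ENNReal.ofReal Dr * ((F.card:ℝ≥0∞) ^ ((1:ℝ) - p/q)
              * weakLqSeq q (fun k => ENNReal.ofReal |f k x|) ^ p) ∂mu01 :=
            lintegral_mono fun x => pointwise_sum_bound p q hp hpq _
              (fun k => ENNReal.ofReal_ne_top) F
        _ = ENNReal.ofReal Dr * ((F.card:ℝ≥0∞) ^ ((1:ℝ) - p/q) * I) := by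
            simp_rw [← mul_assoc]
            rw [lintegral_const_mul' _ _
              (ENNReal.mul_ne_top ENNReal.ofReal_ne_top
                (ENNReal.rpow_ne_top_of_nonneg hepos hcardtop)), hI, mul_assoc]
    have hsplitn : (F.card:ℝ≥0∞) = (F.card:ℝ≥0∞) ^ (p/q) * (F.card:ℝ≥0∞) ^ ((1:ℝ) - p/q) := by
      rw [← ENNReal.rpow_add _ _ hcard0 hcardtop,
        show p/q + (1 - p/q) = 1 by ring, ENNReal.rpow_one]
    have hm0 : ((F.card:ℝ≥0∞) ^ ((1:ℝ) - p/q)) ≠ 0 :=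
      (ENNReal.rpow_pos (by exact_mod_cast h0) hcardtop).ne'
    have hmtop : ((F.card:ℝ≥0∞) ^ ((1:ℝ) - p/q)) ≠ ⊤ :=
      ENNReal.rpow_ne_top_of_nonneg hepos hcardtop
    have hchain := le_trans step1 step2
    nth_rewrite 1 [hsplitn] at hchain
    refine (ENNReal.mul_le_mul_iff_left hm0 hmtop).mp ?_
    calc (F.card:ℝ≥0∞) ^ (p/q) * ENNReal.ofReal (t ^ p) * (F.card:ℝ≥0∞) ^ ((1:ℝ) - p/q)
        = (F.card:ℝ≥0∞) ^ (p/q) * (F.card:ℝ≥0∞) ^ ((1:ℝ) - p/q) * ENNReal.ofReal (t ^ p) := by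
          ring
      _ ≤ ENNReal.ofReal Dr * ((F.card:ℝ≥0∞) ^ ((1:ℝ) - p/q) * I) := hchain
      _ = ENNReal.ofReal Dr * I * (F.card:ℝ≥0∞) ^ ((1:ℝ) - p/q) := by ring
  -- now the supremum
  rw [weakLqSeq]
  apply iSup_le
  rintro ⟨t, ht⟩
  have ht' : 0 < t := ht
  by_cases hS : {k : ℕ | ENNReal.ofReal t
      < eLpNorm (f k) (ENNReal.ofReal p) mu01}.Finite
  · rw [Measure.count_apply_finite _ hS]
    have hmem : ∀ k ∈ hS.toFinset,
        ENNReal.ofReal t < eLpNorm (f k) (ENNReal.ofReal p) mu01 := by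
      intro k hk
      exact (Set.Finite.mem_toFinset hS).mp hk
    have h1 := key t ht' hS.toFinset hmem
    have h2 := ENNReal.rpow_le_rpow h1 (by positivity : (0:ℝ) ≤ 1/p)
    rw [ENNReal.mul_rpow_of_nonneg _ _ (by positivity),
      ENNReal.mul_rpow_of_nonneg _ _ (by positivity),
      ← ENNReal.rpow_mul,
      show (p/q) * (1/p) = 1/q by field_simp,
      ENNReal.ofReal_rpow_of_pos (by positivity),
      show (t ^ p) ^ (1/p) = t by
        rw [← Real.rpow_mul ht'.le, mul_one_div, div_self hp0.ne', Real.rpow_one],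
      ENNReal.ofReal_rpow_of_pos hDpos] at h2
    rw [mul_comm] at h2
    exact h2
  · rw [Measure.count_apply_infinite hS]
    have hItop : I = ⊤ := by
      by_contra hne
      have hMne : ENNReal.ofReal Dr * I ≠ ⊤ := ENNReal.mul_ne_top ENNReal.ofReal_ne_top hne
      have hT0 : ENNReal.ofReal (t ^ p) ≠ 0 := by
        simp only [ne_eq, ENNReal.ofReal_eq_zero, not_le]; positivity
      have hX : (ENNReal.ofReal Dr * I / ENNReal.ofReal (t ^ p)) ^ (q/p) ≠ ⊤ :=
        ENNReal.rpow_ne_top_of_nonneg (by positivity)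
          (ENNReal.div_lt_top hMne hT0).ne
      obtain ⟨m, hm⟩ := ENNReal.exists_nat_gt hX
      obtain ⟨F, hFsub, hFcard⟩ := Set.Infinite.exists_subset_card_eq hS m
      have h1 := key t ht' F (fun k hk => hFsub hk)
      rw [hFcard] at h1
      have h2 : (m:ℝ≥0∞) ^ (p/q) ≤ ENNReal.ofReal Dr * I / ENNReal.ofReal (t ^ p) := by
        rw [ENNReal.le_div_iff_mul_le (Or.inl hT0) (Or.inl ENNReal.ofReal_ne_top)]
        exact h1
      have h3 := ENNReal.rpow_le_rpow h2 (by positivity : (0:ℝ) ≤ q/p)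
      rw [← ENNReal.rpow_mul, show (p/q) * (q/p) = 1 by field_simp,
        ENNReal.rpow_one] at h3
      exact absurd h3 (not_le.mpr hm)
    have hRtop : ENNReal.ofReal (Dr ^ (1/p)) * I ^ (1/p) = ⊤ := by
      rw [hItop, ENNReal.top_rpow_of_pos (by positivity),
        ENNReal.mul_top (ENNReal.ofReal_pos.mpr (Real.rpow_pos_of_pos hDpos _)).ne']
    rw [hRtop]
    exact le_top
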